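/- Let M > 0, ε ∈ (0,1) and μ₁, μ₂ ∈ ℝ satisfy (1-ε)μ₁ + εμ₂ = 0 and max(μ₁², μ₂², |μ₁μ₂|) ≤ M²/4. Let f̃(x) = (1-ε)φ_G(x-μ₁) + ε·φ_G(x-μ₂). Then ∫_ℝ (f̃(x) - φ_G(x))²/φ_G(x) dx ≤ C²(M)·[ε(1-ε)(μ₂-μ₁)²]², where C²(M) = 1/2 + (2/3)·M²·e^{M²/4}. -/

import Mathlib

open MeasureTheory Filter Set

noncomputable section

/-- The measure on `ℝ` with Lebesgue density `f`. -/
def pdfMeasure (f : ℝ → ℝ) : Measure ℝ :=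
  MeasureTheory.volume.withDensity (fun x => ENNReal.ofReal (f x))

/-- The joint law of `n` i.i.d. observations with common density `f`. -/
def sampleMeasure (n : ℕ) (f : ℝ → ℝ) : Measure (Fin n → ℝ) :=
  Measure.pi (fun _ : Fin n => pdfMeasure f)

/-- The `k`-th order statistic (for `1 ≤ k ≤ n`) of the sample `ω`. -/
def oStat {n : ℕ} (k : ℕ) (ω : Fin n → ℝ) : ℝ :=
  if h : 1 ≤ k ∧ k ≤ n then ω (Tuple.sort ω ⟨k - 1, by omega⟩) else 0

/-- The spacing `X_{(n-k+1)} - X_{(k)}` of the order statistics. -/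
def spacing {n : ℕ} (k : ℕ) (ω : Fin n → ℝ) : ℝ :=
  oStat (n - k + 1) ω - oStat k ω

/-- `K_n = {2^j : 0 ≤ j ≤ ⌊log₂ (n/2)⌋}`. -/
def Kfin (n : ℕ) : Finset ℕ :=
  (Finset.range (Nat.log 2 (n / 2) + 1)).image (fun j => 2 ^ j)

/-- The `(1-u)`-quantile of the spacing `X_{(n-k+1)} - X_{(k)}` under the null
hypothesis (sample of density `φ`; under `H₀` this law does not depend on the
translation parameter). -/
def spacingQuantile (n : ℕ) (φ : ℝ → ℝ) (u : ℝ) (k : ℕ) : ℝ :=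
  sInf {t : ℝ | sampleMeasure n φ {ω | spacing k ω > t} ≤ ENNReal.ofReal u}

/-- The corrected level `α_n`. -/
def alphaN (n : ℕ) (φ : ℝ → ℝ) (α : ℝ) : ℝ :=
  sSup {u : ℝ | u ∈ Set.Ioo (0:ℝ) 1 ∧
    sampleMeasure n φ {ω | ∃ k ∈ Kfin n, spacing k ω > spacingQuantile n φ u k}
      ≤ ENNReal.ofReal α}

/-- The rejection region of the multiple spacing test `Ψ_α`. -/
def psiReject (n : ℕ) (φ : ℝ → ℝ) (α : ℝ) : Set (Fin n → ℝ) :=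
  {ω | ∃ k ∈ Kfin n, spacing k ω > spacingQuantile n φ (alphaN n φ α) k}

/-- The empirical (unbiased) variance `S_n²`. -/
def varStat {n : ℕ} (ω : Fin n → ℝ) : ℝ :=
  (∑ i, (ω i - (∑ j, ω j) / (n : ℝ)) ^ 2) / ((n : ℝ) - 1)

/-- The `(1-α)`-quantile of `S_n²` under the null hypothesis. -/
def varQuantile (n : ℕ) (φ : ℝ → ℝ) (α : ℝ) : ℝ :=
  sInf {t : ℝ | sampleMeasure n φ {ω | varStat ω > t} ≤ ENNReal.ofReal α}

/-- The standard Gaussian density. -/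
def phiG (x : ℝ) : ℝ := (Real.sqrt (2 * Real.pi))⁻¹ * Real.exp (-x ^ 2 / 2)

/-- A two-component Gaussian mixture density. -/
def mixG (ε μ₁ μ₂ : ℝ) : ℝ → ℝ := fun x => (1 - ε) * phiG (x - μ₁) + ε * phiG (x - μ₂)

/-- Survival function `Φ̄ = 1 - Φ` of the density `φ`. -/
def Phibar (φ : ℝ → ℝ) (u : ℝ) : ℝ := 1 - ∫ x in Set.Iic u, φ x

/-- The standard Laplace density. -/
def phiL (x : ℝ) : ℝ := (1 / 2) * Real.exp (-|x|)

/-- A two-component Laplace mixture density. -/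
def mixL (ε μ₁ μ₂ : ℝ) : ℝ → ℝ := fun x => (1 - ε) * phiL (x - μ₁) + ε * phiL (x - μ₂)

/-- The threshold `ρ(k,n) = k/n + (1 + √(1+2kβ))/(nβ)`. -/
def rhoKn (n k : ℕ) (β : ℝ) : ℝ :=
  ((k : ℝ) / (n : ℝ)) + (1 + Real.sqrt (1 + 2 * (k : ℝ) * β)) / ((n : ℝ) * β)

lemma phiG_eq_gauss (a : ℝ) : (fun x => phiG (x - a)) = ProbabilityTheory.gaussianPDFReal a 1 := by
  funext x
  simp [phiG, ProbabilityTheory.gaussianPDFReal]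

lemma phiG_pos (x : ℝ) : 0 < phiG x := by
  have : (0:ℝ) < Real.sqrt (2 * Real.pi) := Real.sqrt_pos.2 (by positivity)
  unfold phiG; positivity

lemma integrable_phiG_shift (a : ℝ) : Integrable (fun x => phiG (x - a)) := by
  rw [phiG_eq_gauss]; exact ProbabilityTheory.integrable_gaussianPDFReal a 1

lemma integral_phiG_shift (a : ℝ) : ∫ x, phiG (x - a) = 1 := by
  rw [phiG_eq_gauss]; exact ProbabilityTheory.integral_gaussianPDFReal_eq_one a one_ne_zero

lemma phiG_shift (a x : ℝ) : phiG (x - a) = phiG x * Real.exp (a * x - a ^ 2 / 2) := by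
  unfold phiG
  rw [mul_assoc, ← Real.exp_add]
  congr 1
  ring_nf

lemma exp_quad {t a : ℝ} (h1 : -t ≤ a) (h2 : a ≤ t) :
    Real.exp a ≤ 1 + a + a ^ 2 / 2 * Real.exp t := by
  have ht : 0 ≤ t := by linarith
  rcases le_or_gt a 0 with ha | ha
  · -- h(s) = 1 + s + s^2/2 * exp t - exp s is antitone on (-∞, 0]
    have hmono : AntitoneOn (fun s : ℝ => 1 + s + s ^ 2 / 2 * Real.exp t - Real.exp s)
        (Set.Iic (0:ℝ)) := by
      apply antitoneOn_of_deriv_nonpos (convex_Iic 0)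
      · fun_prop
      · intro s hs
        exact (((differentiable_const _).add differentiable_id).add
          (((differentiable_id.pow 2).div_const 2).mul_const _)).sub
          Real.differentiable_exp |>.differentiableAt.differentiableWithinAt
      · intro s hs
        rw [interior_Iic] at hs
        have hd : deriv (fun s : ℝ => 1 + s + s ^ 2 / 2 * Real.exp t - Real.exp s) s
            = 1 + s * Real.exp t - Real.exp s := by
          have h1 : HasDerivAt (fun s : ℝ => 1 + s + s ^ 2 / 2 * Real.exp t - Real.exp s)
              (0 + 1 + (2 * s ^ 1 / 2) * Real.exp t - Real.exp s) s := by
            exact (((hasDerivAt_const s 1).add (hasDerivAt_id s)).add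
              (((hasDerivAt_pow 2 s).div_const 2).mul_const _)).sub (Real.hasDerivAt_exp s)
          rw [h1.deriv]; ring
        rw [hd]
        have h3 : 1 + s ≤ Real.exp s := Real.add_one_le_exp s |>.trans_eq' (by ring)
        have h4 : s * Real.exp t ≤ s := by
          have hs' : s < 0 := hs
          nlinarith [Real.one_le_exp ht]
        linarith
    have := hmono (Set.mem_Iic.2 ha) (Set.mem_Iic.2 le_rfl) ha
    simp only [Real.exp_zero] at this
    linarith
  · -- monotone case on [0, ∞): h' = 1 + s exp t - exp s ≥ 0 for s ∈ [0,t]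
    have hmono : MonotoneOn (fun s : ℝ => 1 + s + s ^ 2 / 2 * Real.exp t - Real.exp s)
        (Set.Icc (0:ℝ) t) := by
      apply monotoneOn_of_deriv_nonneg (convex_Icc 0 t)
      · fun_prop
      · intro s hs
        exact (((differentiable_const _).add differentiable_id).add
          (((differentiable_id.pow 2).div_const 2).mul_const _)).sub
          Real.differentiable_exp |>.differentiableAt.differentiableWithinAt
      · intro s hs
        rw [interior_Icc] at hs
        have hd : deriv (fun s : ℝ => 1 + s + s ^ 2 / 2 * Real.exp t - Real.exp s) s
            = 1 + s * Real.exp t - Real.exp s := by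
          have h1 : HasDerivAt (fun s : ℝ => 1 + s + s ^ 2 / 2 * Real.exp t - Real.exp s)
              (0 + 1 + (2 * s ^ 1 / 2) * Real.exp t - Real.exp s) s := by
            exact (((hasDerivAt_const s 1).add (hasDerivAt_id s)).add
              (((hasDerivAt_pow 2 s).div_const 2).mul_const _)).sub (Real.hasDerivAt_exp s)
          rw [h1.deriv]; ring
        rw [hd]
        -- exp s (1 - s) ≤ 1 from 1 - s ≤ exp (-s)
        have h5 : Real.exp s * (1 - s) ≤ 1 := by
          have := Real.add_one_le_exp (-s)
          have h6 : Real.exp s * Real.exp (-s) = 1 := by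
            rw [← Real.exp_add]; simp
          nlinarith [Real.exp_pos s]
        have h7 : Real.exp s ≤ Real.exp t := Real.exp_le_exp.2 hs.2.le
        nlinarith [Real.exp_pos s, hs.1.le]
    have := hmono (Set.mem_Icc.2 ⟨le_rfl, ht⟩) (Set.mem_Icc.2 ⟨ha.le, h2⟩) ha.le
    simp only [Real.exp_zero] at this
    linarith

lemma pointwise (ε μ₁ μ₂ x : ℝ) :
    ((1 - ε) * phiG (x - μ₁) + ε * phiG (x - μ₂) - phiG x) ^ 2 / phiG x
    = Real.exp (μ₁ ^ 2) * (1 - ε) ^ 2 * phiG (x - 2 * μ₁)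
      + 2 * ε * (1 - ε) * Real.exp (μ₁ * μ₂) * phiG (x - (μ₁ + μ₂))
      + Real.exp (μ₂ ^ 2) * ε ^ 2 * phiG (x - 2 * μ₂)
      - 2 * (1 - ε) * phiG (x - μ₁) - 2 * ε * phiG (x - μ₂) + phiG x := by
  have hP := (phiG_pos x).ne'
  rw [div_eq_iff hP]
  rw [phiG_shift μ₁ x, phiG_shift μ₂ x, phiG_shift (2 * μ₁) x, phiG_shift (μ₁ + μ₂) x,
    phiG_shift (2 * μ₂) x]
  have hA : Real.exp (μ₁ * x - μ₁ ^ 2 / 2) * Real.exp (μ₁ * x - μ₁ ^ 2 / 2)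
      = Real.exp (μ₁ ^ 2) * Real.exp (2 * μ₁ * x - (2 * μ₁) ^ 2 / 2) := by
    rw [← Real.exp_add, ← Real.exp_add]; congr 1; ring
  have hB : Real.exp (μ₁ * x - μ₁ ^ 2 / 2) * Real.exp (μ₂ * x - μ₂ ^ 2 / 2)
      = Real.exp (μ₁ * μ₂) * Real.exp ((μ₁ + μ₂) * x - (μ₁ + μ₂) ^ 2 / 2) := by
    rw [← Real.exp_add, ← Real.exp_add]; congr 1; ring
  have hC : Real.exp (μ₂ * x - μ₂ ^ 2 / 2) * Real.exp (μ₂ * x - μ₂ ^ 2 / 2)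
      = Real.exp (μ₂ ^ 2) * Real.exp (2 * μ₂ * x - (2 * μ₂) ^ 2 / 2) := by
    rw [← Real.exp_add, ← Real.exp_add]; congr 1; ring
  set P := phiG x
  linear_combination (P ^ 2 * (1 - ε) ^ 2) * hA + (2 * ε * (1 - ε) * P ^ 2) * hB
    + (ε ^ 2 * P ^ 2) * hC

lemma integral_val (ε μ₁ μ₂ : ℝ) :
    ∫ x, ((1 - ε) * phiG (x - μ₁) + ε * phiG (x - μ₂) - phiG x) ^ 2 / phiG x
    = Real.exp (μ₁ ^ 2) * (1 - ε) ^ 2 + 2 * ε * (1 - ε) * Real.exp (μ₁ * μ₂)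
      + Real.exp (μ₂ ^ 2) * ε ^ 2 - 1 := by
  have h0 : (fun x => ((1 - ε) * phiG (x - μ₁) + ε * phiG (x - μ₂) - phiG x) ^ 2 / phiG x)
      = fun x => Real.exp (μ₁ ^ 2) * (1 - ε) ^ 2 * phiG (x - 2 * μ₁)
      + 2 * ε * (1 - ε) * Real.exp (μ₁ * μ₂) * phiG (x - (μ₁ + μ₂))
      + Real.exp (μ₂ ^ 2) * ε ^ 2 * phiG (x - 2 * μ₂)
      - 2 * (1 - ε) * phiG (x - μ₁) - 2 * ε * phiG (x - μ₂) + phiG x := by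
    funext x; exact pointwise ε μ₁ μ₂ x
  rw [h0]
  have i1 := (integrable_phiG_shift (2 * μ₁)).const_mul (Real.exp (μ₁ ^ 2) * (1 - ε) ^ 2)
  have i2 := (integrable_phiG_shift (μ₁ + μ₂)).const_mul (2 * ε * (1 - ε) * Real.exp (μ₁ * μ₂))
  have i3 := (integrable_phiG_shift (2 * μ₂)).const_mul (Real.exp (μ₂ ^ 2) * ε ^ 2)
  have i4 := (integrable_phiG_shift μ₁).const_mul (2 * (1 - ε))
  have i5 := (integrable_phiG_shift μ₂).const_mul (2 * ε)
  have i6 : Integrable (fun x => phiG (x - 0)) := integrable_phiG_shift 0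
  simp only [sub_zero] at i6
  have iT2 : Integrable (fun x => Real.exp (μ₁ ^ 2) * (1 - ε) ^ 2 * phiG (x - 2 * μ₁)
      + 2 * ε * (1 - ε) * Real.exp (μ₁ * μ₂) * phiG (x - (μ₁ + μ₂))) volume := i1.add i2
  have iT3 : Integrable (fun x => Real.exp (μ₁ ^ 2) * (1 - ε) ^ 2 * phiG (x - 2 * μ₁)
      + 2 * ε * (1 - ε) * Real.exp (μ₁ * μ₂) * phiG (x - (μ₁ + μ₂))
      + Real.exp (μ₂ ^ 2) * ε ^ 2 * phiG (x - 2 * μ₂)) volume := iT2.add i3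
  have iT4 : Integrable (fun x => Real.exp (μ₁ ^ 2) * (1 - ε) ^ 2 * phiG (x - 2 * μ₁)
      + 2 * ε * (1 - ε) * Real.exp (μ₁ * μ₂) * phiG (x - (μ₁ + μ₂))
      + Real.exp (μ₂ ^ 2) * ε ^ 2 * phiG (x - 2 * μ₂)
      - 2 * (1 - ε) * phiG (x - μ₁)) volume := iT3.sub i4
  have iT5 : Integrable (fun x => Real.exp (μ₁ ^ 2) * (1 - ε) ^ 2 * phiG (x - 2 * μ₁)
      + 2 * ε * (1 - ε) * Real.exp (μ₁ * μ₂) * phiG (x - (μ₁ + μ₂))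
      + Real.exp (μ₂ ^ 2) * ε ^ 2 * phiG (x - 2 * μ₂)
      - 2 * (1 - ε) * phiG (x - μ₁) - 2 * ε * phiG (x - μ₂)) volume := iT4.sub i5
  rw [integral_add iT5 i6, integral_sub iT4 i5, integral_sub iT3 i4, integral_add iT2 i3,
    integral_add i1 i2, integral_const_mul, integral_const_mul, integral_const_mul,
    integral_const_mul, integral_const_mul, integral_phiG_shift, integral_phiG_shift,
    integral_phiG_shift, integral_phiG_shift, integral_phiG_shift]
  have : ∫ x, phiG x = 1 := by
    have := integral_phiG_shift 0
    simpa using this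
  rw [this]
  ring


/-- bound on the chi-square divergence for a centered Gaussian
mixture with small means. -/
theorem stmt14 (M ε μ₁ μ₂ : ℝ) (hM : 0 < M) (hε : ε ∈ Set.Ioo (0:ℝ) 1)
    (hmean : (1 - ε) * μ₁ + ε * μ₂ = 0)
    (hbound : max (max (μ₁ ^ 2) (μ₂ ^ 2)) |μ₁ * μ₂| ≤ M ^ 2 / 4) :
    ∫ x, ((1 - ε) * phiG (x - μ₁) + ε * phiG (x - μ₂) - phiG x) ^ 2 / phiG x
      ≤ (1 / 2 + (2 / 3) * M ^ 2 * Real.exp (M ^ 2 / 4)) *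
          (ε * (1 - ε) * (μ₂ - μ₁) ^ 2) ^ 2 := by
  
  obtain ⟨hε0, hε1⟩ := hε
  rw [integral_val]
  set t := M ^ 2 / 4 with ht
  have ht0 : (0:ℝ) ≤ t := by positivity
  have hb1 : μ₁ ^ 2 ≤ t := le_trans (le_trans (le_max_left _ _) (le_max_left _ _)) hbound
  have hb2 : μ₂ ^ 2 ≤ t := le_trans (le_trans (le_max_right _ _) (le_max_left _ _)) hbound
  have hb3 : |μ₁ * μ₂| ≤ t := le_trans (le_max_right _ _) hbound
  have hq1 := exp_quad (t := t) (a := μ₁ ^ 2) (by nlinarith [sq_nonneg μ₁]) hb1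
  have hq2 := exp_quad (t := t) (a := μ₁ * μ₂) (neg_le_of_abs_le hb3) (le_of_abs_le hb3)
  have hq3 := exp_quad (t := t) (a := μ₂ ^ 2) (by nlinarith [sq_nonneg μ₂]) hb2
  set E := Real.exp t with hE
  have hEpos : (0:ℝ) < E := Real.exp_pos t
  have hE1 : E * (1 - t) ≤ 1 := by
    have h := Real.add_one_le_exp (-t)
    have hinv : E * Real.exp (-t) = 1 := by rw [hE, ← Real.exp_add]; simp
    nlinarith [h, hinv, hEpos]
  have hv : (1 - ε) * μ₁ ^ 2 + ε * μ₂ ^ 2 = ε * (1 - ε) * (μ₂ - μ₁) ^ 2 := by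
    linear_combination ((1 - ε) * μ₁ + ε * μ₂) * hmean
  have hlin : (1 - ε) ^ 2 * μ₁ ^ 2 + 2 * ε * (1 - ε) * (μ₁ * μ₂) + ε ^ 2 * μ₂ ^ 2 = 0 := by
    linear_combination ((1 - ε) * μ₁ + ε * μ₂) * hmean
  have H1 := mul_le_mul_of_nonneg_left hq1 (sq_nonneg (1 - ε))
  have H2 := mul_le_mul_of_nonneg_left hq2 (by nlinarith : (0:ℝ) ≤ 2 * ε * (1 - ε))
  have H3 := mul_le_mul_of_nonneg_left hq3 (sq_nonneg ε)
  have Hsum : Real.exp (μ₁ ^ 2) * (1 - ε) ^ 2 + 2 * ε * (1 - ε) * Real.exp (μ₁ * μ₂)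
      + Real.exp (μ₂ ^ 2) * ε ^ 2
      ≤ 1 + E / 2 * ((1 - ε) * μ₁ ^ 2 + ε * μ₂ ^ 2) ^ 2 := by
    have hid : (1 - ε) ^ 2 * (1 + μ₁ ^ 2 + (μ₁ ^ 2) ^ 2 / 2 * E)
        + (2 * ε * (1 - ε)) * (1 + μ₁ * μ₂ + (μ₁ * μ₂) ^ 2 / 2 * E)
        + ε ^ 2 * (1 + μ₂ ^ 2 + (μ₂ ^ 2) ^ 2 / 2 * E)
        = 1 + ((1 - ε) ^ 2 * μ₁ ^ 2 + 2 * ε * (1 - ε) * (μ₁ * μ₂) + ε ^ 2 * μ₂ ^ 2)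
          + E / 2 * ((1 - ε) * μ₁ ^ 2 + ε * μ₂ ^ 2) ^ 2 := by ring
    linarith [H1, H2, H3, hlin, hid]
  have hEhalf : E / 2 ≤ 1 / 2 + 2 / 3 * M ^ 2 * E := by
    have h9 : E * (1 - t) = E - M ^ 2 / 4 * E := by rw [ht]; ring
    linarith [hE1, h9, mul_nonneg (sq_nonneg M) hEpos.le]
  have Hmul := mul_le_mul_of_nonneg_right hEhalf (sq_nonneg ((1 - ε) * μ₁ ^ 2 + ε * μ₂ ^ 2))
  rw [← hv]
  linarith [Hsum, Hmul]
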